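/- Let D be a division ring and K a subfield of D that is self-invariant, meaning the normalizer N_{D*}(K*) = {d ∈ D* : dK d⁻¹ ⊆ K} together with 0 equals K. Then K is a maximal subfield of D, i.e., any subfield of D containing K equals K. -/
import Mathlib


/-- A self-invariant subfield `K` of a division ring `D` (i.e. the normalizer of `K*` in `D*`
together with `0` equals `K`) is a maximal subfield with respect to inclusion. -/
theorem stmt2 {D : Type*} [DivisionRing D] (K : Subfield D)
    (hcomm : ∀ x ∈ K, ∀ y ∈ K, x * y = y * x)
    (hself : ∀ d : D, d ∈ K ↔ d = 0 ∨ (d ≠ 0 ∧ ∀ k ∈ K, d * k * d⁻¹ ∈ K)) :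
    ∀ T : Subfield D, (∀ x ∈ T, ∀ y ∈ T, x * y = y * x) → K ≤ T → T = K := by
  intro T hT hKT
  refine le_antisymm (fun t ht => ?_) hKT
  rw [hself]
  by_cases h0 : t = 0
  · exact Or.inl h0
  · refine Or.inr ⟨h0, fun k hk => ?_⟩
    have : t * k * t⁻¹ = k := by
      rw [hT t ht k (hKT hk), mul_assoc, mul_inv_cancel₀ h0, mul_one]
    rw [this]; exact hk
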